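/- For (S,z), (S',z') ∈ I, the orbit closure containment O_{(S',z')} ⊆ closure(O_{(S,z)}) holds if and only if S' ⊆ S and z' − z ∈ ⨁_{α∈S∖S'} ℂh_α. Consequently, the relation (S',z') ≤ (S,z) defined by the right-hand side is a partial order on I, and (Π, 0) is its unique maximal element. -/

import Mathlib

/-- For `(S,z), (S',z') ∈ I`, one has
`O_{(S',z')} ⊆ closure O_{(S,z)}` iff `S' ⊆ S` and `z' − z ∈ ⨁_{α∈S∖S'} ℂ h_α`.
Consequently this relation is the closure order on `B`-orbits in `V_Toda`,
every orbit lies in the closure of `O_{(Π,0)}`, and `(Π,0)` is the unique such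
maximal element. (`L` carries its canonical Hausdorff vector-space topology.) -/
lemma coeffExtract {ι M : Type*} [Fintype ι] [AddCommGroup M] [Module ℂ M]
    {v : ι → M} (hv : LinearIndependent ℂ v) (f : ι → ℂ) (J : Set ι)
    (h : (∑ i, f i • v i) ∈ Submodule.span ℂ (v '' J)) : ∀ i ∉ J, f i = 0 := by
  rw [Finsupp.mem_span_image_iff_linearCombination] at h
  obtain ⟨l, hls, hl⟩ := h
  have h2 : Finsupp.linearCombination ℂ v (Finsupp.equivFunOnFinite.symm f)
      = ∑ i, f i • v i := by
    rw [Finsupp.linearCombination_apply, Finsupp.sum_fintype]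
    · rfl
    · simp
  have h3 : l = Finsupp.equivFunOnFinite.symm f := hv (by rw [hl, h2])
  intro i hi
  have h4 := (Finsupp.mem_supported' _ _).mp hls i hi
  rw [h3] at h4
  simpa using h4

theorem stmt6
    (L : Type) [LieRing L] [LieAlgebra ℂ L] [FiniteDimensional ℂ L]
    [TopologicalSpace L] [IsTopologicalAddGroup L] [ContinuousSMul ℂ L] [T2Space L]
    (G : Type) [Group G]
    (Ad : G →* (L ≃ₗ[ℂ] L))
    (B T : Subgroup G) (hTB : T ≤ B)
    (σ : Type) [Fintype σ] [DecidableEq σ]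
    (t u : Submodule ℂ L)
    (eα eneg : σ → L)
    (hαt : ∀ a, ⁅eα a, eneg a⁆ ∈ t)
    (hbasis : LinearIndependent ℂ (Sum.elim (fun a : σ => ⁅eα a, eneg a⁆) eneg))
    (hαspan : t = Submodule.span ℂ (Set.range fun a : σ => ⁅eα a, eneg a⁆))
    (π : L →ₗ[ℂ] L)
    (hπ_t : ∀ x ∈ t, π x = x)
    (hπ_neg : ∀ a, π (eneg a) = eneg a)
    (hπ_u : ∀ x ∈ u, π x = 0)
    (χ : σ → G → ℂ)
    (hT_t : ∀ s ∈ T, ∀ h ∈ t, Ad s h = h)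
    (hT_neg : ∀ s ∈ T, ∀ a, Ad s (eneg a) = (χ a s)⁻¹ • eneg a)
    (hTsurj : ∀ c : σ → ℂ, (∀ a, c a ≠ 0) → ∃ s ∈ T, ∀ a, χ a s = c a)
    (horbit : ∀ bb ∈ B, ∃ s ∈ T, ∃ ya : σ → ℂ,
      ∀ v0 ∈ t, ∀ vneg : σ → ℂ,
        π (Ad bb (v0 + ∑ a, vneg a • eneg a))
          = (v0 + ∑ a, (ya a * vneg a) • ⁅eα a, eneg a⁆)
            + ∑ a, ((χ a s)⁻¹ * vneg a) • eneg a)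
    (hUfree : ∀ ya : σ → ℂ, ∃ bb ∈ B, ∀ v0 ∈ t, ∀ vneg : σ → ℂ,
        π (Ad bb (v0 + ∑ a, vneg a • eneg a))
          = (v0 + ∑ a, (ya a * vneg a) • ⁅eα a, eneg a⁆) + ∑ a, vneg a • eneg a) :
    -- closure order description
    ((∀ (S S' : Finset σ) (z z' : L),
        z ∈ Submodule.span ℂ ((fun a : σ => ⁅eα a, eneg a⁆) '' {a | a ∉ S}) →
        z' ∈ Submodule.span ℂ ((fun a : σ => ⁅eα a, eneg a⁆) '' {a | a ∉ S'}) →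
        ({w | ∃ bb ∈ B, w = π (Ad bb (z' + ∑ a ∈ S', eneg a))}
            ⊆ closure {w | ∃ bb ∈ B, w = π (Ad bb (z + ∑ a ∈ S, eneg a))}
          ↔ S' ⊆ S ∧
            z' - z ∈ Submodule.span ℂ ((fun a : σ => ⁅eα a, eneg a⁆) '' ↑(S \ S'))))
    -- (Π, 0) dominates every orbit in the closure order
    ∧ (∀ (S : Finset σ) (z : L),
        z ∈ Submodule.span ℂ ((fun a : σ => ⁅eα a, eneg a⁆) '' {a | a ∉ S}) →
        {w | ∃ bb ∈ B, w = π (Ad bb (z + ∑ a ∈ S, eneg a))}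
          ⊆ closure {w | ∃ bb ∈ B,
              w = π (Ad bb ((0 : L) + ∑ a ∈ (Finset.univ : Finset σ), eneg a))})
    -- and it is the unique maximal element
    ∧ (∀ (S : Finset σ) (z : L),
        z ∈ Submodule.span ℂ ((fun a : σ => ⁅eα a, eneg a⁆) '' {a | a ∉ S}) →
        (∀ (S' : Finset σ) (z' : L),
          z' ∈ Submodule.span ℂ ((fun a : σ => ⁅eα a, eneg a⁆) '' {a | a ∉ S'}) →
          {w | ∃ bb ∈ B, w = π (Ad bb (z' + ∑ a ∈ S', eneg a))}
            ⊆ closure {w | ∃ bb ∈ B, w = π (Ad bb (z + ∑ a ∈ S, eneg a))}) →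
        S = Finset.univ ∧ z = 0)) := by
  classical
  -- sum reindexing helpers
  have hsum : ∀ (c : σ → ℂ) (S : Finset σ),
      (∑ a, (if a ∈ S then c a else 0) • eneg a) = ∑ a ∈ S, (c a) • eneg a := by
    intro c S; simp [ite_smul, Finset.sum_ite_mem]
  have hsum1 : ∀ (S : Finset σ),
      (∑ a, (if a ∈ S then (1:ℂ) else 0) • eneg a) = ∑ a ∈ S, eneg a := by
    intro S; rw [hsum]; simp
  have ht : ∀ (S : Finset σ) (z : L),
      z ∈ Submodule.span ℂ ((fun a : σ => ⁅eα a, eneg a⁆) '' {a | a ∉ S}) → z ∈ t := by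
    intro S z hz
    rw [hαspan]
    exact Submodule.span_mono (Set.image_subset_range _ _) hz
  -- general form of orbit elements
  have horb : ∀ (S : Finset σ) (z : L), z ∈ t → ∀ bb ∈ B, ∃ ya d : σ → ℂ,
      (∀ a, a ∉ S → ya a = 0) ∧ (∀ a, a ∉ S → d a = 0) ∧
      π (Ad bb (z + ∑ a ∈ S, eneg a))
        = z + ∑ a, ya a • ⁅eα a, eneg a⁆ + ∑ a, d a • eneg a := by
    intro S z hzt bb hbb
    obtain ⟨s, hsT, ya, hya⟩ := horbit bb hbb
    refine ⟨fun a => if a ∈ S then ya a else 0, fun a => if a ∈ S then (χ a s)⁻¹ else 0,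
      fun a ha => by simp [ha], fun a ha => by simp [ha], ?_⟩
    have h1 := hya z hzt (fun a => if a ∈ S then (1:ℂ) else 0)
    rw [hsum1] at h1
    rw [h1]
    congr 1
    · congr 1
      refine Finset.sum_congr rfl fun a _ => ?_
      by_cases ha : a ∈ S <;> simp [ha]
    · refine Finset.sum_congr rfl fun a _ => ?_
      by_cases ha : a ∈ S <;> simp [ha]
  -- membership construction
  have hmem : ∀ (S : Finset σ) (z : L), z ∈ t → ∀ tc c : σ → ℂ, (∀ a, c a ≠ 0) →
      (z + ∑ a, (if a ∈ S then tc a else 0) • ⁅eα a, eneg a⁆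
        + ∑ a, (if a ∈ S then c a else 0) • eneg a)
        ∈ {w | ∃ bb ∈ B, w = π (Ad bb (z + ∑ a ∈ S, eneg a))} := by
    intro S z hzt tc c hc
    obtain ⟨s, hsT, hχ⟩ := hTsurj (fun a => (c a)⁻¹) (fun a => inv_ne_zero (hc a))
    obtain ⟨b, hbB, hb⟩ := hUfree (fun a => tc a * (c a)⁻¹)
    refine ⟨b * s, mul_mem hbB (hTB hsT), ?_⟩
    have hAds : Ad s (z + ∑ a ∈ S, eneg a)
        = z + ∑ a, (if a ∈ S then c a else 0) • eneg a := by
      rw [map_add, hT_t s hsT z hzt, map_sum, hsum]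
      congr 1
      refine Finset.sum_congr rfl fun a _ => ?_
      rw [hT_neg s hsT a, hχ a, inv_inv]
    have hmul : Ad (b * s) (z + ∑ a ∈ S, eneg a)
        = Ad b (z + ∑ a, (if a ∈ S then c a else 0) • eneg a) := by
      rw [map_mul, ← hAds]; rfl
    rw [hmul, hb z hzt]
    congr 1
    · congr 1
      refine Finset.sum_congr rfl fun a _ => ?_
      by_cases ha : a ∈ S
      · simp only [ha, if_true]
        rw [mul_assoc, inv_mul_cancel₀ (hc a), mul_one]
      · simp [ha]
  -- closures are contained in closed affine sets
  have hclos : ∀ (S : Finset σ) (z : L), z ∈ t →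
      closure {w | ∃ bb ∈ B, w = π (Ad bb (z + ∑ a ∈ S, eneg a))}
        ⊆ {w | w - z ∈ Submodule.span ℂ
            ((Sum.elim (fun a : σ => ⁅eα a, eneg a⁆) eneg) ''
              (Sum.inl '' ↑S ∪ Sum.inr '' ↑S))} := by
    intro S z hzt
    apply closure_minimal
    · rintro w ⟨bb, hbb, rfl⟩
      obtain ⟨ya, d, hya0, hd0, heq⟩ := horb S z hzt bb hbb
      rw [heq]
      have he : z + ∑ a, ya a • ⁅eα a, eneg a⁆ + ∑ a, d a • eneg a - z
          = ∑ a, ya a • ⁅eα a, eneg a⁆ + ∑ a, d a • eneg a := by abel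
      rw [Set.mem_setOf_eq, he]
      refine Submodule.add_mem _ (Submodule.sum_mem _ fun a _ => ?_)
        (Submodule.sum_mem _ fun a _ => ?_)
      · by_cases ha : a ∈ S
        · exact Submodule.smul_mem _ _ (Submodule.subset_span
            ⟨Sum.inl a, Or.inl ⟨a, by simpa using ha, rfl⟩, rfl⟩)
        · rw [hya0 a ha, zero_smul]; exact Submodule.zero_mem _
      · by_cases ha : a ∈ S
        · exact Submodule.smul_mem _ _ (Submodule.subset_span
            ⟨Sum.inr a, Or.inr ⟨a, by simpa using ha, rfl⟩, rfl⟩)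
        · rw [hd0 a ha, zero_smul]; exact Submodule.zero_mem _
    · exact IsClosed.preimage (continuous_id.sub continuous_const)
        (Submodule.closed_of_finiteDimensional _)
  -- the key equivalence
  have key : ∀ (S S' : Finset σ) (z z' : L),
      z ∈ Submodule.span ℂ ((fun a : σ => ⁅eα a, eneg a⁆) '' {a | a ∉ S}) →
      z' ∈ Submodule.span ℂ ((fun a : σ => ⁅eα a, eneg a⁆) '' {a | a ∉ S'}) →
      ({w | ∃ bb ∈ B, w = π (Ad bb (z' + ∑ a ∈ S', eneg a))}
          ⊆ closure {w | ∃ bb ∈ B, w = π (Ad bb (z + ∑ a ∈ S, eneg a))}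
        ↔ S' ⊆ S ∧
          z' - z ∈ Submodule.span ℂ ((fun a : σ => ⁅eα a, eneg a⁆) '' ↑(S \ S'))) := by
    intro S S' z z' hz hz'
    have hzt := ht S z hz
    have hz't := ht S' z' hz'
    constructor
    · intro hsub
      have hp' : (z' + ∑ a ∈ S', eneg a)
          ∈ {w | ∃ bb ∈ B, w = π (Ad bb (z' + ∑ a ∈ S', eneg a))} := by
        refine ⟨1, one_mem B, ?_⟩
        have h1 : Ad 1 (z' + ∑ a ∈ S', eneg a) = z' + ∑ a ∈ S', eneg a := by
          rw [map_one]; rfl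
        rw [h1, map_add, hπ_t z' hz't, map_sum]
        congr 1
        exact (Finset.sum_congr rfl fun a _ => hπ_neg a).symm
      have hpc : (z' + ∑ a ∈ S', eneg a) - z ∈ Submodule.span ℂ
          ((Sum.elim (fun a : σ => ⁅eα a, eneg a⁆) eneg) ''
            (Sum.inl '' ↑S ∪ Sum.inr '' ↑S)) := hclos S z hzt (hsub hp')
      have hdmem : z' - z ∈ Submodule.span ℂ (Set.range fun a : σ => ⁅eα a, eneg a⁆) := by
        rw [← hαspan]; exact sub_mem hz't hzt
      obtain ⟨d, hd⟩ := (Submodule.mem_span_range_iff_exists_fun ℂ).mp hdmem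
      have hfsum : ∑ i, (Sum.elim d (fun a => if a ∈ S' then (1:ℂ) else 0)) i •
            (Sum.elim (fun a : σ => ⁅eα a, eneg a⁆) eneg) i
          = (z' + ∑ a ∈ S', eneg a) - z := by
        rw [Fintype.sum_sum_type]
        simp only [Sum.elim_inl, Sum.elim_inr]
        rw [hd, hsum1 S']
        abel
      rw [← hfsum] at hpc
      have hf0 := coeffExtract hbasis _ _ hpc
      have hSS' : S' ⊆ S := by
        intro a ha
        by_contra hna
        have h0 := hf0 (Sum.inr a) (by simp [hna])
        simp [ha] at h0
      have hdS : ∀ a, a ∉ S → d a = 0 := by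
        intro a ha
        have h0 := hf0 (Sum.inl a) (by simp [ha])
        simpa using h0
      -- second application, on {a | a ∉ S'}
      have hz'z : z' - z ∈ Submodule.span ℂ
          ((Sum.elim (fun a : σ => ⁅eα a, eneg a⁆) eneg) '' (Sum.inl '' {a | a ∉ S'})) := by
        simp only [Set.image_image, Sum.elim_inl]
        refine sub_mem hz' (Submodule.span_mono (Set.image_mono ?_) hz)
        exact fun a ha hm => ha (hSS' hm)
      have hgsum : ∑ i, (Sum.elim d (0 : σ → ℂ)) i •
            (Sum.elim (fun a : σ => ⁅eα a, eneg a⁆) eneg) i = z' - z := by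
        rw [Fintype.sum_sum_type]
        simp only [Sum.elim_inl, Sum.elim_inr, Pi.zero_apply, zero_smul,
          Finset.sum_const_zero, add_zero]
        exact hd
      rw [← hgsum] at hz'z
      have hdS' : ∀ a, a ∈ S' → d a = 0 := by
        intro a ha
        have h0 := coeffExtract hbasis _ _ hz'z (Sum.inl a) (by simp [ha])
        simpa using h0
      refine ⟨hSS', ?_⟩
      rw [← hd]
      refine Submodule.sum_mem _ fun a _ => ?_
      by_cases h1 : a ∈ S
      · by_cases h2 : a ∈ S'
        · rw [hdS' a h2, zero_smul]; exact Submodule.zero_mem _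
        · exact Submodule.smul_mem _ _ (Submodule.subset_span
            ⟨a, by simp [h1, h2], rfl⟩)
      · rw [hdS a h1, zero_smul]; exact Submodule.zero_mem _
    · rintro ⟨hSS', hzz⟩ w hw
      obtain ⟨bb, hbb, rfl⟩ := hw
      obtain ⟨ya, dd, hya0, hdd0, heq⟩ := horb S' z' hz't bb hbb
      rw [heq]
      rw [Finsupp.mem_span_image_iff_linearCombination] at hzz
      obtain ⟨l, hl_supp, hl⟩ := hzz
      have hlf : ∑ a, l a • ⁅eα a, eneg a⁆ = z' - z := by
        rw [← hl, Finsupp.linearCombination_apply, Finsupp.sum_fintype]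
        intro i; exact zero_smul _ _
      have hl0 : ∀ a, a ∉ S \ S' → l a = 0 := by
        intro a ha
        exact (Finsupp.mem_supported' _ _).mp hl_supp a (by simpa using ha)
      -- the limiting family
      have hcont : Continuous (fun ε : ℂ =>
          z + ∑ a, (if a ∈ S then l a + ya a else 0) • ⁅eα a, eneg a⁆
            + ∑ a, (if a ∈ S then (if dd a = 0 then ε else dd a) else 0) • eneg a) := by
        refine Continuous.add continuous_const (continuous_finset_sum _ fun a _ => ?_)
        by_cases haS : a ∈ S
        · by_cases hda : dd a = 0
          · simp only [haS, if_true, hda]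
            exact continuous_id.smul continuous_const
          · simp only [haS, if_true, hda, if_false]
            exact continuous_const
        · simp only [haS, if_false]
          exact continuous_const
      have hval : z + ∑ a, (if a ∈ S then l a + ya a else 0) • ⁅eα a, eneg a⁆
            + ∑ a, (if a ∈ S then (if dd a = 0 then (0:ℂ) else dd a) else 0) • eneg a
          = z' + ∑ a, ya a • ⁅eα a, eneg a⁆ + ∑ a, dd a • eneg a := by
        have e1 : ∀ a : σ, (if a ∈ S then l a + ya a else 0) = l a + ya a := by
          intro a
          by_cases haS : a ∈ S
          · simp [haS]
          · have h1 : l a = 0 := hl0 a (by simp [haS])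
            have h2 : ya a = 0 := hya0 a (fun hm => haS (hSS' hm))
            simp [haS, h1, h2]
        have e2 : ∀ a : σ, (if a ∈ S then (if dd a = 0 then (0:ℂ) else dd a) else 0) = dd a := by
          intro a
          by_cases haS : a ∈ S
          · by_cases hda : dd a = 0 <;> simp [haS, hda]
          · simp [haS, hdd0 a (fun hm => haS (hSS' hm))]
        simp only [e1, e2]
        have e3 : ∑ a, (l a + ya a) • ⁅eα a, eneg a⁆
            = (z' - z) + ∑ a, ya a • ⁅eα a, eneg a⁆ := by
          rw [← hlf, ← Finset.sum_add_distrib]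
          exact Finset.sum_congr rfl fun a _ => add_smul _ _ _
        rw [e3]
        abel
      have htend := (hcont.tendsto 0).mono_left
        (nhdsWithin_le_nhds (s := {(0:ℂ)}ᶜ))
      rw [hval] at htend
      refine mem_closure_of_tendsto htend ?_
      filter_upwards [self_mem_nhdsWithin] with ε hε
      have hε' : ε ≠ 0 := hε
      exact hmem S z hzt (fun a => l a + ya a) (fun a => if dd a = 0 then ε else dd a)
        (fun a => by by_cases hda : dd a = 0 <;> simp [hda, hε'])
  -- assemble
  refine ⟨fun S S' z z' hz hz' => key S S' z z' hz hz', ?_, ?_⟩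
  · intro S z hz
    refine (key Finset.univ S 0 z (Submodule.zero_mem _) hz).mpr
      ⟨Finset.subset_univ S, ?_⟩
    rw [sub_zero]
    have hset : ((Finset.univ \ S : Finset σ) : Set σ) = {a | a ∉ S} := by
      ext a; simp
    rw [hset]; exact hz
  · intro S z hz hall
    obtain ⟨hsub, hmem0⟩ := (key S Finset.univ z 0 hz (Submodule.zero_mem _)).mp
      (hall Finset.univ 0 (Submodule.zero_mem _))
    have hSu : S = Finset.univ := Finset.univ_subset_iff.mp hsub
    refine ⟨hSu, ?_⟩
    rw [Finset.sdiff_eq_empty_iff_subset.mpr (Finset.subset_univ S)] at hmem0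
    simpa using hmem0
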